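/- The quartic polynomial a₅t⁴ + a₄t³ + a₃t² + 1 ∈ ℂ[t] cannot have a double root at t = 0; more precisely, any root γ of this polynomial is nonzero, and if γ is a double root then the octic F₈ = y₀y₄ - y₃² + y₂⁴ + a₃y₂²y₁⁴ + a₄y₂y₁⁶ + a₅y₁⁸ has a singular point with y₁ ≠ 0 in the affine chart y₁ = 1, i.e., the polynomial y₀y₄ - y₃² + y₂⁴ + a₃y₂² + a₄y₂ + a₅ ∈ ℂ[y₀,y₂,y₃,y₄] has a critical point on its zero locus. -/

import Mathlib

/-- Any root of `a₅t⁴ + a₄t³ + a₃t² + 1` is nonzero, and if it has a double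
root `γ` then the octic `y₀y₄ - y₃² + y₂⁴ + a₃y₂²y₁⁴ + a₄y₂y₁⁶ + a₅y₁⁸`
has a singular point in the chart `y₁ = 1`: the polynomial
`y₀y₄ - y₃² + y₂⁴ + a₃y₂² + a₄y₂ + a₅` has a critical point on its zero locus. -/
theorem stmt_15 (a₃ a₄ a₅ : ℂ) :
    (∀ γ : ℂ, a₅ * γ ^ 4 + a₄ * γ ^ 3 + a₃ * γ ^ 2 + 1 = 0 → γ ≠ 0) ∧
    (∀ γ : ℂ, a₅ * γ ^ 4 + a₄ * γ ^ 3 + a₃ * γ ^ 2 + 1 = 0 →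
      4 * a₅ * γ ^ 3 + 3 * a₄ * γ ^ 2 + 2 * a₃ * γ = 0 →
      ∃ y₀ y₂ y₃ y₄ : ℂ,
        y₀ * y₄ - y₃ ^ 2 + y₂ ^ 4 + a₃ * y₂ ^ 2 + a₄ * y₂ + a₅ = 0 ∧
        y₄ = 0 ∧
        4 * y₂ ^ 3 + 2 * a₃ * y₂ + a₄ = 0 ∧
        -(2 * y₃) = 0 ∧
        y₀ = 0) := by
  constructor
  · intro γ h h0
    rw [h0] at h
    norm_num at h
  · intro γ hp hq
    have hγ : γ ≠ 0 := by
      intro h0; rw [h0] at hp; norm_num at hp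
    refine ⟨0, γ⁻¹, 0, 0, ?_, rfl, ?_, by ring, rfl⟩
    · field_simp
      linear_combination hp
    · field_simp
      linear_combination 4 * hp - γ * hq
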